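/- Fix τ with |α_τ| = min_{0<μ<N} |α_μ| and let Ψ_{↑…↑} be the configuration with all ψ_μ = 0, and Ψ_{↑…↓} the configuration with ψ_τ = π and ψ_μ = 0 for μ ≠ τ. Then E(Ψ_{↑…↑}) − E(Ψ_{↑…↓}) = 2(α_0 − |α_τ|); in particular, if α_0 = |α_τ| then E(Ψ_{↑…↑}) = E(Ψ_{↑…↓}), and this common value is strictly lower than the energy of every collinear configuration that is neither identically 0 nor of the form ψ_ν = π for a single index ν with |α_ν| = |α_τ| and ψ_μ = 0 otherwise. -/

import Mathlib

open Real Finset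

/-- The energy of an `N`-spin polygon in the angle representation. -/
noncomputable def polygonEnergy (N : ℕ) (α ψ : ℕ → ℝ) : ℝ :=
  α 0 * Real.cos (∑ μ ∈ Finset.Ico 1 N, ψ μ) +
    ∑ μ ∈ Finset.Ico 1 N, α μ * Real.cos (ψ μ)

open Classical in
lemma energy_collinear (N : ℕ) (α φ : ℕ → ℝ)
    (hφ : ∀ μ ∈ Finset.Ico 1 N, φ μ = 0 ∨ φ μ = π) :
    polygonEnergy N α φ =
      α 0 * (-1 : ℝ) ^ ((Finset.Ico 1 N).filter (fun μ => φ μ = π)).card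
        + ∑ μ ∈ Finset.Ico 1 N, α μ
        - 2 * ∑ μ ∈ (Finset.Ico 1 N).filter (fun μ => φ μ = π), α μ := by
  set S := Finset.Ico 1 N with hS
  set T := S.filter (fun μ => φ μ = π) with hT
  have hsum : ∑ μ ∈ S, φ μ = (T.card : ℝ) * π := by
    rw [Finset.sum_filter_add_sum_filter_not S (fun μ => φ μ = π) φ |>.symm]
    have h1 : ∑ μ ∈ T, φ μ = (T.card : ℝ) * π := by
      rw [Finset.sum_congr rfl (fun μ hμ => (Finset.mem_filter.1 hμ).2)]
      simp [mul_comm, hT]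
    have h2 : ∑ μ ∈ S.filter (fun μ => ¬ φ μ = π), φ μ = 0 := by
      apply Finset.sum_eq_zero
      intro μ hμ
      rcases Finset.mem_filter.1 hμ with ⟨hμS, hμn⟩
      rcases hφ μ hμS with h | h
      · exact h
      · exact absurd h hμn
    rw [h1, h2, add_zero]
  have hcos : Real.cos (∑ μ ∈ S, φ μ) = (-1 : ℝ) ^ T.card := by
    rw [hsum]
    have := Real.cos_int_mul_pi_sub 0 (T.card : ℤ)
    simpa using this
  have hterm : ∑ μ ∈ S, α μ * Real.cos (φ μ)
      = ∑ μ ∈ S, α μ - 2 * ∑ μ ∈ T, α μ := by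
    rw [Finset.sum_filter_add_sum_filter_not S (fun μ => φ μ = π)
      (fun μ => α μ * Real.cos (φ μ)) |>.symm,
      Finset.sum_filter_add_sum_filter_not S (fun μ => φ μ = π) α |>.symm]
    have h1 : ∑ μ ∈ T, α μ * Real.cos (φ μ) = -∑ μ ∈ T, α μ := by
      rw [← Finset.sum_neg_distrib]
      refine Finset.sum_congr rfl fun μ hμ => ?_
      rw [(Finset.mem_filter.1 hμ).2, Real.cos_pi]; ring
    have h2 : ∑ μ ∈ S.filter (fun μ => ¬ φ μ = π), α μ * Real.cos (φ μ)
        = ∑ μ ∈ S.filter (fun μ => ¬ φ μ = π), α μ := by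
      refine Finset.sum_congr rfl fun μ hμ => ?_
      rcases Finset.mem_filter.1 hμ with ⟨hμS, hμn⟩
      rcases hφ μ hμS with h | h
      · rw [h, Real.cos_zero, mul_one]
      · exact absurd h hμn
    rw [h1, h2]; ring
  rw [polygonEnergy, ← hS, hcos, hterm]; ring

theorem collinear_energy_difference (N : ℕ) (hN : 2 < N) (α : ℕ → ℝ)
    (hα0 : 0 < α 0) (hαμ : ∀ μ ∈ Finset.Ico 1 N, α μ < 0)
    (τ : ℕ) (hτ : τ ∈ Finset.Ico 1 N)
    (hτmin : ∀ μ ∈ Finset.Ico 1 N, |α τ| ≤ |α μ|) :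
    polygonEnergy N α (fun _ => 0) -
        polygonEnergy N α (fun μ => if μ = τ then π else 0) =
      2 * (α 0 - |α τ|) ∧
    (α 0 = |α τ| →
      polygonEnergy N α (fun _ => 0) =
        polygonEnergy N α (fun μ => if μ = τ then π else 0) ∧
      ∀ φ : ℕ → ℝ, (∀ μ ∈ Finset.Ico 1 N, φ μ = 0 ∨ φ μ = π) →
        ¬ (∀ μ ∈ Finset.Ico 1 N, φ μ = 0) →
        ¬ (∃ ν ∈ Finset.Ico 1 N, |α ν| = |α τ| ∧
            ∀ μ ∈ Finset.Ico 1 N, φ μ = if μ = ν then π else 0) →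
        polygonEnergy N α (fun _ => 0) < polygonEnergy N α φ) := by
  classical
  set S := Finset.Ico 1 N with hS
  have hπ : (π : ℝ) ≠ 0 := Real.pi_ne_zero
  have hατ : α τ < 0 := hαμ τ hτ
  have hab : |α τ| = -α τ := abs_of_neg hατ
  -- energy of all-zero configuration
  have hE0 : polygonEnergy N α (fun _ => 0) = α 0 + ∑ μ ∈ S, α μ := by
    have := energy_collinear N α (fun _ => 0) (fun μ _ => Or.inl rfl)
    have hfil : S.filter (fun μ => (0 : ℝ) = π) = ∅ := by
      simp [Ne.symm hπ]
    rw [this]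
    simp [hfil, ← hS]
  -- energy of the flipped configuration
  have hφτ : ∀ μ ∈ S, (if μ = τ then π else (0:ℝ)) = 0 ∨ (if μ = τ then π else (0:ℝ)) = π := by
    intro μ _; by_cases h : μ = τ <;> simp [h]
  have hfilτ : S.filter (fun μ => (if μ = τ then π else (0:ℝ)) = π) = {τ} := by
    ext μ
    simp only [Finset.mem_filter, Finset.mem_singleton]
    constructor
    · rintro ⟨hμS, h⟩
      by_contra hne
      rw [if_neg hne] at h
      exact hπ h.symm
    · rintro rfl; exact ⟨hτ, by simp⟩
  have hEτ : polygonEnergy N α (fun μ => if μ = τ then π else 0)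
      = -α 0 + ∑ μ ∈ S, α μ - 2 * α τ := by
    rw [energy_collinear N α _ hφτ, ← hS, hfilτ]
    simp only [Finset.card_singleton, Finset.sum_singleton, pow_one]; ring
  have hdiff : polygonEnergy N α (fun _ => 0) -
      polygonEnergy N α (fun μ => if μ = τ then π else 0) = 2 * (α 0 - |α τ|) := by
    rw [hE0, hEτ, hab]; ring
  refine ⟨hdiff, fun hmin => ⟨by linarith [hdiff, hmin], ?_⟩⟩
  intro φ hφcol hφ0 hφsingle
  set T := S.filter (fun μ => φ μ = π) with hT
  have hTsub : T ⊆ S := Finset.filter_subset _ _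
  have hTne : T.Nonempty := by
    rw [Finset.filter_nonempty_iff]
    by_contra h
    push_neg at h
    apply hφ0
    intro μ hμ
    rcases hφcol μ hμ with h0 | hp
    · exact h0
    · exact absurd hp (h μ hμ)
  have hEφ := energy_collinear N α φ hφcol
  rw [← hS, ← hT] at hEφ
  have hposT : ∀ μ ∈ T, 0 < -α μ := fun μ hμ => by
    have := hαμ μ (hTsub hμ); linarith
  have hsumT : 0 < ∑ μ ∈ T, -α μ := Finset.sum_pos hposT hTne
  rw [hE0, hEφ]
  rcases Nat.even_or_odd T.card with he | ho
  · rw [he.neg_one_pow]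
    have : ∑ μ ∈ T, -α μ = -∑ μ ∈ T, α μ := by rw [Finset.sum_neg_distrib]
    nlinarith
  · rw [ho.neg_one_pow]
    -- need α 0 < ∑ μ ∈ T, -α μ
    have hlow : ∀ μ ∈ T, α 0 ≤ -α μ := fun μ hμ => by
      have h1 := hτmin μ (hTsub hμ)
      have h2 := hαμ μ (hTsub hμ)
      rw [hab, abs_of_neg h2] at h1
      rw [hmin, hab]; linarith
    have hkey : α 0 < ∑ μ ∈ T, -α μ := by
      rcases Finset.eq_singleton_or_nontrivial (hTne.choose_spec) with hsing | hnt
      · -- T = {ν}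
        set ν := hTne.choose with hν
        have hνT : ν ∈ T := hTne.choose_spec
        have hνS : ν ∈ S := hTsub hνT
        have hνπ : φ ν = π := (Finset.mem_filter.1 hνT).2
        have hle : α 0 ≤ -α ν := hlow ν hνT
        rcases lt_or_eq_of_le hle with h | h
        · rw [hsing]; simpa using h
        · exfalso
          apply hφsingle
          refine ⟨ν, hνS, ?_, ?_⟩
          · rw [abs_of_neg (hαμ ν hνS), ← h, hmin]
          · intro μ hμ
            by_cases hμν : μ = ν
            · rw [if_pos hμν, hμν, hνπ]
            · rw [if_neg hμν]
              rcases hφcol μ hμ with h0 | hp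
              · exact h0
              · exfalso
                exact hμν (by
                  have : μ ∈ T := Finset.mem_filter.2 ⟨hμ, hp⟩
                  rw [hsing] at this
                  simpa using this)
      · -- |T| ≥ 2
        have h2 : 2 ≤ T.card := Finset.one_lt_card_iff_nontrivial.2 hnt
        have : (T.card : ℝ) * α 0 ≤ ∑ μ ∈ T, -α μ := by
          calc (T.card : ℝ) * α 0 = ∑ _μ ∈ T, α 0 := by
                rw [Finset.sum_const, nsmul_eq_mul]
            _ ≤ ∑ μ ∈ T, -α μ := Finset.sum_le_sum hlow
        have hc2 : (2 : ℝ) ≤ (T.card : ℝ) := by exact_mod_cast h2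
        nlinarith
    have : ∑ μ ∈ T, -α μ = -∑ μ ∈ T, α μ := by rw [Finset.sum_neg_distrib]
    nlinarith
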